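/- Let L ∈ ℕ and a = (a_0, …, a_L) ∈ ℝ^{L+1} with a_0 = −1, and let n > 0 and k > 0 be real numbers. Let I be a finite index set, let λ : I → ℝ satisfy, for each i, either λ_i = 0 or λ_i ∈ [n/k, n], and suppose S = #{i ∈ I : λ_i > 0} ≤ k. Let (N_i)_{i ∈ I} be independent random variables where N_i is Poisson with mean λ_i when λ_i > 0 and N_i = 0 almost surely when λ_i = 0, and let Ŝ = Σ_{i ∈ I} g_L(N_i). Then E[((Ŝ − S)/k)²] ≤ sup_{λ ∈ [n/k, n]} g(a, λ). -/

import Mathlib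

open Finset MeasureTheory ProbabilityTheory

/-- `P L a x = ∑_{l=0}^L a_l x^l`. -/
noncomputable def P (L : ℕ) (a : ℕ → ℝ) (x : ℝ) : ℝ :=
  ∑ l ∈ range (L + 1), a l * x ^ l

/-- `g(a, λ) = (1/k)·∑_{l=0}^L e^{−λ} a_l² λ^l l! + (e^{−λ} P_L(λ, a))²`. -/
noncomputable def g (k : ℝ) (L : ℕ) (a : ℕ → ℝ) (x : ℝ) : ℝ :=
  (1 / k) * (∑ l ∈ range (L + 1),
      Real.exp (-x) * (a l) ^ 2 * x ^ l * (l.factorial : ℝ))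
    + (Real.exp (-x) * P L a x) ^ 2

/-- The estimator function `g_L`: `g_L(j) = a_j·j! + 1` for `j ≤ L`, and `g_L(j) = 1`
for `j > L`. -/
noncomputable def gL (L : ℕ) (a : ℕ → ℝ) (j : ℕ) : ℝ :=
  if j ≤ L then a j * (j.factorial : ℝ) + 1 else 1

lemma integrable_nat_of_vanish {ν : Measure ℕ} [IsFiniteMeasure ν] {L : ℕ} {F : ℕ → ℝ}
    (hF : ∀ j, L < j → F j = 0) : Integrable F ν := by
  refine (integrable_const (∑ j ∈ range (L+1), ‖F j‖)).mono'
    Measurable.of_discrete.aestronglyMeasurable (ae_of_all _ fun m => ?_)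
  by_cases hm : m ≤ L
  · exact Finset.single_le_sum (fun j _ => norm_nonneg (F j)) (mem_range.2 (by omega))
  · simp only [hF m (by omega), norm_zero]
    positivity

lemma poisson_integral (r : NNReal) {L : ℕ} {F : ℕ → ℝ} (hF : ∀ j, L < j → F j = 0) :
    ∫ j, F j ∂(poissonMeasure r) = ∑ j ∈ range (L+1), poissonPMFReal r j * F j := by
  rw [integral_poissonMeasure]
  rw [tsum_eq_sum (s := range (L+1))
    (fun b hb => by simp [hF b (by simpa using hb)])]
  refine Finset.sum_congr rfl fun j hj => ?_
  rw [smul_eq_mul]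
  rfl

lemma continuous_g (k : ℝ) (L : ℕ) (a : ℕ → ℝ) : Continuous (g k L a) := by
  unfold g P
  fun_prop

lemma g_nonneg {k : ℝ} (hk : 0 < k) (L : ℕ) (a : ℕ → ℝ) {x : ℝ} (hx : 0 ≤ x) :
    0 ≤ g k L a x := by
  unfold g
  refine add_nonneg (mul_nonneg (by positivity) (Finset.sum_nonneg fun l _ => ?_)) (sq_nonneg _)
  have := pow_nonneg hx l
  positivity

open Classical in
theorem stmt_16 {Ω : Type*} [MeasurableSpace Ω] (μ : Measure Ω) [IsProbabilityMeasure μ]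
    {I : Type*} [Fintype I] (L : ℕ) (a : ℕ → ℝ) (ha0 : a 0 = -1)
    (n k : ℝ) (hn : 0 < n) (hk : 0 < k)
    (lam : I → ℝ) (hlam : ∀ i, lam i = 0 ∨ lam i ∈ Set.Icc (n / k) n)
    (hS : ((Finset.univ.filter fun i : I => 0 < lam i).card : ℝ) ≤ k)
    (N : I → Ω → ℕ) (hmeas : ∀ i, Measurable (N i))
    (hindep : iIndepFun N μ)
    (hpois : ∀ i, 0 < lam i → μ.map (N i) = poissonMeasure (lam i).toNNReal)
    (hzero : ∀ i, lam i = 0 → ∀ᵐ ω ∂μ, N i ω = 0) :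
    (∫ ω, (((∑ i : I, gL L a (N i ω)) -
        ((Finset.univ.filter fun i : I => 0 < lam i).card : ℝ)) / k) ^ 2 ∂μ)
      ≤ sSup (g k L a '' Set.Icc (n / k) n) := by
  set T : Finset I := Finset.univ.filter fun i : I => 0 < lam i with hT
  set f : ℕ → ℝ := fun j => gL L a j - 1 with hf
  set s := sSup (g k L a '' Set.Icc (n / k) n) with hs
  set M : ℝ → ℝ := fun x => Real.exp (-x) * P L a x with hM
  set V : ℝ → ℝ := fun x => ∑ l ∈ range (L + 1),
      Real.exp (-x) * (a l) ^ 2 * x ^ l * (l.factorial : ℝ) with hVdef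
  have hf0 : ∀ j, L < j → f j = 0 := fun j hj => by
    simp [hf, gL, if_neg (by omega : ¬ j ≤ L)]
  set C : ℝ := ∑ j ∈ range (L + 1), |f j| with hCdef
  have hC0 : 0 ≤ C := Finset.sum_nonneg fun _ _ => abs_nonneg _
  have hfC : ∀ m, |f m| ≤ C := by
    intro m
    by_cases hm : m ≤ L
    · exact Finset.single_le_sum (fun j _ => abs_nonneg (f j)) (mem_range.2 (by omega))
    · rw [hf0 m (by omega), abs_zero]; exact hC0
  have mf : Measurable f := Measurable.of_discrete
  set Y : I → Ω → ℝ := fun i ω => f (N i ω) with hY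
  have hmeasY : ∀ i, Measurable (Y i) := fun i => mf.comp (hmeas i)
  have hintY : ∀ i, Integrable (Y i) μ := fun i =>
    (integrable_const C).mono' (hmeasY i).aestronglyMeasurable
      (ae_of_all _ fun ω => by simpa using hfC (N i ω))
  have hintYY : ∀ i j, Integrable (fun ω => Y i ω * Y j ω) μ := by
    intro i j
    refine (integrable_const (C * C)).mono'
      ((hmeasY i).mul (hmeasY j)).aestronglyMeasurable (ae_of_all _ fun ω => ?_)
    have := mul_le_mul (hfC (N i ω)) (hfC (N j ω)) (abs_nonneg _) hC0
    simpa [abs_mul] using this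
  have hTmem : ∀ i, i ∈ T ↔ 0 < lam i := fun i => by simp [hT]
  have hTlam : ∀ i, i ∉ T → lam i = 0 := by
    intro i hi
    rcases hlam i with h | h
    · exact h
    · exact absurd ((hTmem i).2 (lt_of_lt_of_le (div_pos hn hk) h.1)) hi
  -- Step A: a.e. rewrite of the integrand
  have hae : ∀ᵐ ω ∂μ, ∀ i, i ∉ T → N i ω = 0 := by
    rw [ae_all_iff]
    intro i
    by_cases hi : i ∈ T
    · exact Filter.Eventually.of_forall fun ω h => absurd hi h
    · exact (hzero i (hTlam i hi)).mono fun ω h _ => h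
  have hstep : ∫ ω, (((∑ i : I, gL L a (N i ω)) - (T.card : ℝ)) / k) ^ 2 ∂μ
      = ∫ ω, ((∑ i ∈ T, Y i ω) / k) ^ 2 ∂μ := by
    refine integral_congr_ae (hae.mono fun ω hω => ?_)
    have h1 : ∑ i : I, gL L a (N i ω) = ∑ i ∈ T, gL L a (N i ω) := by
      refine (Finset.sum_subset (Finset.subset_univ T) ?_).symm
      intro i _ hi
      rw [hω i hi]
      simp [gL, ha0]
    have h2 : ∑ i ∈ T, Y i ω = (∑ i ∈ T, gL L a (N i ω)) - T.card := by
      simp [hY, hf, Finset.sum_sub_distrib]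
    simp only [h1, ← h2]
  rw [hstep]
  simp_rw [div_pow]
  rw [integral_div]
  -- Step B: expand the square
  have hexp : ∫ ω, (∑ i ∈ T, Y i ω) ^ 2 ∂μ
      = ∑ i ∈ T, ∑ j ∈ T, ∫ ω, Y i ω * Y j ω ∂μ := by
    simp_rw [sq, Finset.sum_mul_sum]
    rw [integral_finset_sum _ (fun i _ => integrable_finset_sum _ fun j _ => hintYY i j)]
    exact Finset.sum_congr rfl fun i _ => integral_finset_sum _ fun j _ => hintYY i j
  rw [hexp]
  -- Step C: compute moments
  have hkey : ∀ i ∈ T, ∀ (F : ℕ → ℝ), (∀ j, L < j → F j = 0) →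
      ∫ ω, F (N i ω) ∂μ
        = ∑ j ∈ range (L + 1), poissonPMFReal (lam i).toNNReal j * F j := by
    intro i hi F hF
    rw [← integral_map (hmeas i).aemeasurable
        (Measurable.of_discrete (f := F)).aestronglyMeasurable,
      hpois i ((hTmem i).1 hi), poisson_integral _ hF]
  have hmean : ∀ i ∈ T, ∫ ω, Y i ω ∂μ = M (lam i) := by
    intro i hi
    have hc : ((lam i).toNNReal : ℝ) = lam i := Real.coe_toNNReal _ ((hTmem i).1 hi).le
    rw [show (fun ω => Y i ω) = fun ω => f (N i ω) from rfl, hkey i hi f hf0]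
    rw [hM]
    simp only [P, Finset.mul_sum]
    refine Finset.sum_congr rfl fun j hj => ?_
    have hjL : j ≤ L := Nat.lt_succ_iff.1 (mem_range.1 hj)
    have hfj : f j = a j * j.factorial := by simp [hf, gL, if_pos hjL]
    rw [hfj]
    simp only [poissonPMFReal, hc]
    have hfac : (j.factorial : ℝ) ≠ 0 := Nat.cast_ne_zero.2 j.factorial_ne_zero
    field_simp
  have hvar : ∀ i ∈ T, ∫ ω, Y i ω * Y i ω ∂μ = V (lam i) := by
    intro i hi
    have hc : ((lam i).toNNReal : ℝ) = lam i := Real.coe_toNNReal _ ((hTmem i).1 hi).le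
    rw [show (fun ω => Y i ω * Y i ω) = fun ω => (fun j => f j * f j) (N i ω) from rfl,
      hkey i hi (fun j => f j * f j) (fun j hj => by simp [hf0 j hj])]
    rw [hVdef]
    refine Finset.sum_congr rfl fun j hj => ?_
    have hjL : j ≤ L := Nat.lt_succ_iff.1 (mem_range.1 hj)
    have hfj : f j = a j * j.factorial := by simp [hf, gL, if_pos hjL]
    rw [hfj]
    simp only [poissonPMFReal, hc]
    have hfac : (j.factorial : ℝ) ≠ 0 := Nat.cast_ne_zero.2 j.factorial_ne_zero
    field_simp
  have hcross : ∀ i ∈ T, ∀ j ∈ T, i ≠ j →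
      ∫ ω, Y i ω * Y j ω ∂μ = M (lam i) * M (lam j) := by
    intro i hi j hj hij
    have h := IndepFun.integral_fun_mul_eq_mul_integral (μ := μ)
      ((hindep.indepFun hij).comp mf mf) (hmeasY i).aestronglyMeasurable
      (hmeasY j).aestronglyMeasurable
    calc ∫ ω, Y i ω * Y j ω ∂μ = (∫ ω, Y i ω ∂μ) * ∫ ω, Y j ω ∂μ := h
      _ = M (lam i) * M (lam j) := by rw [hmean i hi, hmean j hj]
  -- Step D: sup facts
  have hbdd : BddAbove (g k L a '' Set.Icc (n / k) n) :=
    (isCompact_Icc.image (continuous_g k L a)).bddAbove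
  have hmemIcc : ∀ i ∈ T, lam i ∈ Set.Icc (n / k) n := fun i hi =>
    (hlam i).resolve_left ((hTmem i).1 hi).ne'
  have hgs : ∀ i ∈ T, g k L a (lam i) ≤ s := fun i hi =>
    le_csSup hbdd (Set.mem_image_of_mem _ (hmemIcc i hi))
  have hs0 : 0 ≤ s := by
    by_cases hnk : n / k ≤ n
    · exact le_trans (g_nonneg hk L a hn.le)
        (le_csSup hbdd (Set.mem_image_of_mem _ ⟨hnk, le_refl n⟩))
    · rw [hs, Set.Icc_eq_empty hnk, Set.image_empty, Real.sSup_empty]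
  -- Step E: the chain of inequalities
  have hgsplit : ∀ x, V x + k * (M x) ^ 2 = k * g k L a x := by
    intro x
    have : g k L a x = 1 / k * V x + (M x) ^ 2 := rfl
    rw [this]
    field_simp
  have hsum : ∑ i ∈ T, ∑ j ∈ T, ∫ ω, Y i ω * Y j ω ∂μ
      ≤ ∑ i ∈ T, (V (lam i) + k * (M (lam i)) ^ 2) := by
    have h1 : ∀ i ∈ T, ∑ j ∈ T, ∫ ω, Y i ω * Y j ω ∂μ
        ≤ V (lam i) + ∑ j ∈ T, |M (lam i)| * |M (lam j)| := by
      intro i hi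
      have heq : ∑ j ∈ T, ∫ ω, Y i ω * Y j ω ∂μ
          = V (lam i) + ∑ j ∈ T.erase i, M (lam i) * M (lam j) := by
        rw [← Finset.add_sum_erase T _ hi, hvar i hi]
        congr 1
        exact Finset.sum_congr rfl fun j hj =>
          hcross i hi j (Finset.mem_of_mem_erase hj) (Finset.ne_of_mem_erase hj).symm
      rw [heq]
      gcongr _ + ?_
      calc ∑ j ∈ T.erase i, M (lam i) * M (lam j)
          ≤ ∑ j ∈ T.erase i, |M (lam i)| * |M (lam j)| :=
            Finset.sum_le_sum fun j _ => (le_abs_self _).trans_eq (abs_mul _ _)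
        _ ≤ ∑ j ∈ T, |M (lam i)| * |M (lam j)| :=
            Finset.sum_le_sum_of_subset_of_nonneg (Finset.erase_subset i T)
              (fun j _ _ => mul_nonneg (abs_nonneg _) (abs_nonneg _))
    calc ∑ i ∈ T, ∑ j ∈ T, ∫ ω, Y i ω * Y j ω ∂μ
        ≤ ∑ i ∈ T, (V (lam i) + ∑ j ∈ T, |M (lam i)| * |M (lam j)|) :=
          Finset.sum_le_sum h1
      _ = (∑ i ∈ T, V (lam i)) + (∑ i ∈ T, |M (lam i)|) ^ 2 := by
          rw [Finset.sum_add_distrib, ← Finset.sum_mul_sum, sq]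
      _ ≤ (∑ i ∈ T, V (lam i)) + (T.card : ℝ) * ∑ i ∈ T, |M (lam i)| ^ 2 := by
          gcongr _ + ?_
          all_goals exact sq_sum_le_card_mul_sum_sq
      _ ≤ (∑ i ∈ T, V (lam i)) + k * ∑ i ∈ T, (M (lam i)) ^ 2 := by
          simp_rw [sq_abs]
          gcongr _ + ?_ * _
      _ = ∑ i ∈ T, (V (lam i) + k * (M (lam i)) ^ 2) := by
          rw [Finset.sum_add_distrib, Finset.mul_sum]
  calc (∑ i ∈ T, ∑ j ∈ T, ∫ ω, Y i ω * Y j ω ∂μ) / k ^ 2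
      ≤ (∑ i ∈ T, (V (lam i) + k * (M (lam i)) ^ 2)) / k ^ 2 := by gcongr
    _ = (∑ i ∈ T, g k L a (lam i)) / k := by
        simp_rw [hgsplit, ← Finset.mul_sum]
        rw [sq]
        field_simp
    _ ≤ ((T.card : ℝ) * s) / k := by
        gcongr
        calc ∑ i ∈ T, g k L a (lam i) ≤ T.card • s := Finset.sum_le_card_nsmul T _ s hgs
          _ = (T.card : ℝ) * s := nsmul_eq_mul _ _
    _ ≤ s := by
        rw [div_le_iff₀ hk]
        exact mul_le_mul_of_nonneg_right hS hs0 |>.trans_eq (mul_comm k s)
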